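/- Subgraph counting as an edge sum on the higher-order network: let G^(k−1) be the graph whose vertices are connected induced (k−1)-subgraphs of G, with u ~ v iff |V(u) ∩ V(v)| = k−2. For an edge (u,v) of G^(k−1), the induced subgraph on V(u) ∪ V(v) has exactly k vertices and is connected; moreover, for each connected induced k-subgraph s of G, the number of edges (u,v) of G^(k−1) with V(u) ∪ V(v) = V(s) equals C(k − |A_s|, 2) when this number is positive, where A_s is the set of articulation points of s — that is, the pairs (x,y) of distinct non-articulation vertices of s are in bijection with such edges. -/

import Mathlib

private lemma erase_eq_erase_iff {V : Type*} [DecidableEq V] {S : Finset V} {x y : V}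
    (hx : x ∈ S) (h : S.erase x = S.erase y) : x = y := by
  by_contra hne
  have : x ∈ S.erase y := Finset.mem_erase.2 ⟨hne, hx⟩
  rw [← h] at this
  exact (Finset.mem_erase.1 this).1 rfl

/-- subgraph counting as an edge sum on the higher-order network:
(i) if `A`, `B` are vertex sets of connected induced `(k−1)`-subgraphs of `G`
with `|A ∩ B| = k−2` (an edge of `G^(k−1)`), then `|A ∪ B| = k` and the induced
subgraph on `A ∪ B` is connected; (ii) for each connected induced `k`-subgraph
on the vertex set `S`, the number of (ordered) edges `(A,B)` of `G^(k−1)` with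
`A ∪ B = S` equals `2·C(k − |A_S|, 2)` whenever `C(k − |A_S|, 2)` is positive,
where `A_S` is the set of articulation points of the subgraph on `S` — i.e. the
unordered such edges are in bijection with the pairs of distinct non-articulation
vertices of `S`. -/
theorem hon_edge_structure {V : Type*} [Fintype V] [DecidableEq V]
    (G : SimpleGraph V) [DecidableRel G.Adj] (k : ℕ) (hk : 3 ≤ k) :
    (∀ A B : Finset V, A.card = k - 1 → B.card = k - 1 →
      (G.induce (A : Set V)).Connected → (G.induce (B : Set V)).Connected →
      (A ∩ B).card = k - 2 →
      (A ∪ B).card = k ∧ (G.induce ((A ∪ B : Finset V) : Set V)).Connected)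
    ∧ (∀ S : Finset V, S.card = k → (G.induce (S : Set V)).Connected →
        0 < Nat.choose
            (k - Set.ncard {w : V | w ∈ S ∧
                ¬ (G.induce ((S.erase w : Finset V) : Set V)).Connected}) 2 →
        Set.ncard {P : Finset V × Finset V |
            P.1.card = k - 1 ∧ P.2.card = k - 1 ∧
            (G.induce (P.1 : Set V)).Connected ∧ (G.induce (P.2 : Set V)).Connected ∧
            (P.1 ∩ P.2).card = k - 2 ∧ P.1 ∪ P.2 = S}
          = 2 * Nat.choose
              (k - Set.ncard {w : V | w ∈ S ∧
                  ¬ (G.induce ((S.erase w : Finset V) : Set V)).Connected}) 2) := by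
  classical
  constructor
  · intro A B hA hB hAc hBc hAB
    have hcard : (A ∪ B).card + (A ∩ B).card = A.card + B.card :=
      Finset.card_union_add_card_inter A B
    have hU : (A ∪ B).card = k := by omega
    refine ⟨hU, ?_⟩
    have hne : ((A : Set V) ∩ (B : Set V)).Nonempty := by
      have h1 : (A ∩ B).Nonempty := Finset.card_pos.1 (by omega)
      obtain ⟨x, hx⟩ := h1
      exact ⟨x, by simpa using Finset.mem_inter.1 hx⟩
    rw [Finset.coe_union]
    exact SimpleGraph.induce_union_connected hAc.preconnected hBc.preconnected hne
  · intro S hS _hSc _hpos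
    set N : Finset V :=
      S.filter (fun w => (G.induce ((S.erase w : Finset V) : Set V)).Connected) with hN
    have hArt : {w : V | w ∈ S ∧
        ¬ (G.induce ((S.erase w : Finset V) : Set V)).Connected} =
        ↑(S.filter (fun w => ¬ (G.induce ((S.erase w : Finset V) : Set V)).Connected)) := by
      ext w; simp
    have hsplit := Finset.card_filter_add_card_filter_not (s := S)
      (p := fun w => (G.induce ((S.erase w : Finset V) : Set V)).Connected)
    have hNcard : N.card = k - Set.ncard {w : V | w ∈ S ∧
        ¬ (G.induce ((S.erase w : Finset V) : Set V)).Connected} := by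
      rw [hArt, Set.ncard_coe_finset]
      have hsplit' : N.card +
          (S.filter (fun w => ¬ (G.induce ((S.erase w : Finset V) : Set V)).Connected)).card
          = S.card := hsplit
      omega
    -- the bijection
    have hset : {P : Finset V × Finset V |
        P.1.card = k - 1 ∧ P.2.card = k - 1 ∧
        (G.induce (P.1 : Set V)).Connected ∧ (G.induce (P.2 : Set V)).Connected ∧
        (P.1 ∩ P.2).card = k - 2 ∧ P.1 ∪ P.2 = S} =
        ↑(N.offDiag.image (fun p => (S.erase p.1, S.erase p.2))) := by
      ext ⟨A, B⟩
      simp only [Set.mem_setOf_eq, Finset.coe_image, Set.mem_image, Finset.mem_coe,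
        Finset.mem_offDiag, Prod.exists, Prod.mk.injEq]
      constructor
      · rintro ⟨hA, hB, hAc, hBc, hABi, hABu⟩
        have hAS : A ⊆ S := hABu ▸ Finset.subset_union_left
        have hBS : B ⊆ S := hABu ▸ Finset.subset_union_right
        have hSA : (S \ A).card = 1 := by
          rw [Finset.card_sdiff_of_subset hAS]; omega
        have hSB : (S \ B).card = 1 := by
          rw [Finset.card_sdiff_of_subset hBS]; omega
        obtain ⟨x, hx⟩ := Finset.card_eq_one.1 hSA
        obtain ⟨y, hy⟩ := Finset.card_eq_one.1 hSB
        have hxS : x ∈ S := (Finset.mem_sdiff.1 (hx ▸ Finset.mem_singleton_self x)).1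
        have hyS : y ∈ S := (Finset.mem_sdiff.1 (hy ▸ Finset.mem_singleton_self y)).1
        have hAe : A = S.erase x := by
          have := Finset.sdiff_sdiff_eq_self hAS
          rw [hx] at this
          rw [← this, Finset.erase_eq]
        have hBe : B = S.erase y := by
          have := Finset.sdiff_sdiff_eq_self hBS
          rw [hy] at this
          rw [← this, Finset.erase_eq]
        have hxy : x ≠ y := by
          rintro rfl
          rw [hAe, ← hBe] at hABi
          rw [Finset.inter_self] at hABi
          omega
        refine ⟨x, y, ⟨?_, ?_, hxy⟩, hAe ▸ rfl, hBe ▸ rfl⟩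
        · exact Finset.mem_filter.2 ⟨hxS, hAe ▸ hAc⟩
        · exact Finset.mem_filter.2 ⟨hyS, hBe ▸ hBc⟩
      · rintro ⟨x, y, ⟨hx, hy, hxy⟩, rfl, rfl⟩
        obtain ⟨hxS, hxc⟩ := Finset.mem_filter.1 hx
        obtain ⟨hyS, hyc⟩ := Finset.mem_filter.1 hy
        have h1 : (S.erase x).card = k - 1 := by rw [Finset.card_erase_of_mem hxS, hS]
        have h2 : (S.erase y).card = k - 1 := by rw [Finset.card_erase_of_mem hyS, hS]
        have hint : S.erase x ∩ S.erase y = (S.erase x).erase y := by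
          ext w
          simp only [Finset.mem_inter, Finset.mem_erase]
          tauto
        have hy' : y ∈ S.erase x := Finset.mem_erase.2 ⟨by tauto, hyS⟩
        refine ⟨h1, h2, hxc, hyc, ?_, ?_⟩
        · rw [hint, Finset.card_erase_of_mem hy', h1]; omega
        · ext w
          simp only [Finset.mem_union, Finset.mem_erase]
          constructor
          · rintro (⟨_, h⟩ | ⟨_, h⟩) <;> exact h
          · intro hw
            by_cases hwx : w = x
            · exact Or.inr ⟨by rw [hwx]; exact hxy, hw⟩
            · exact Or.inl ⟨hwx, hw⟩
    rw [hset, Set.ncard_coe_finset]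
    have hinj : Set.InjOn (fun p : V × V => (S.erase p.1, S.erase p.2)) ↑N.offDiag := by
      rintro ⟨a, b⟩ ha ⟨c, d⟩ hc h
      simp only [Finset.mem_coe, Finset.mem_offDiag] at ha hc
      have haS : a ∈ S := (Finset.mem_filter.1 ha.1).1
      have hbS : b ∈ S := (Finset.mem_filter.1 ha.2.1).1
      simp only [Prod.mk.injEq] at h ⊢
      exact ⟨erase_eq_erase_iff haS h.1, erase_eq_erase_iff hbS h.2⟩
    rw [Finset.card_image_of_injOn hinj, Finset.offDiag_card, hNcard]
    set m := k - Set.ncard {w : V | w ∈ S ∧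
        ¬ (G.induce ((S.erase w : Finset V) : Set V)).Connected}
    rw [Nat.choose_two_right]
    have heven : 2 ∣ m * (m - 1) := by
      rcases Nat.even_or_odd m with h | h
      · exact Dvd.dvd.mul_right h.two_dvd _
      · rcases Nat.eq_zero_or_pos m with h0 | h0
        · simp [h0]
        · exact Dvd.dvd.mul_left (Nat.Odd.sub_odd h odd_one).two_dvd _
    rw [Nat.mul_div_cancel' heven]
    cases m with
    | zero => simp
    | succ n => rw [Nat.succ_sub_one, Nat.mul_succ]; omega
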